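/- For every non-empty word u over a nonempty finite alphabet A, ρ(u) equals the maximum, taken over all factorizations u = v₁·a·v₂ with a a letter, of r(v₁,a) + ℓ(a,v₂) + 1. -/

import Mathlib

/-- Simon's congruence of order `k`: `u` and `v` have the same subwords
(subsequences) of length at most `k`. -/
def SimonCong {A : Type*} (k : ℕ) (u v : List A) : Prop :=
  ∀ s : List A, s.length ≤ k → (s.Sublist u ↔ s.Sublist v)

/-- The subword distance `δ(u,v) = sup {k | u ∼ₖ v} ∈ ℕ ∪ {∞}`. -/
noncomputable def delta {A : Type*} (u v : List A) : ℕ∞ :=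
  ⨆ k ∈ {k : ℕ | SimonCong k u v}, (k : ℕ∞)

/-- Right side distance `r(u,t) = δ(u, u·t)`. -/
noncomputable def sideR {A : Type*} (u t : List A) : ℕ∞ :=
  delta u (u ++ t)

/-- Left side distance `ℓ(t,u) = δ(t·u, u)`. -/
noncomputable def sideL {A : Type*} (t u : List A) : ℕ∞ :=
  delta (t ++ u) u

/-- The piecewise complexity `h(u)`: the least `n` such that every word
`v` with `u ∼ₙ v` equals `u`. -/
noncomputable def pieceH {A : Type*} (u : List A) : ℕ :=
  sInf {n : ℕ | ∀ v : List A, SimonCong n u v → v = u}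

/-- A word `u` is `m`-reduced if no strict subword of `u` is `∼ₘ`-equivalent to `u`. -/
def MReduced {A : Type*} (m : ℕ) (u : List A) : Prop :=
  ∀ u' : List A, u'.Sublist u → u' ≠ u → ¬ SimonCong m u' u

/-- The piecewise minimality index `ρ(u)`: the least `m` such that `u` is `m`-reduced. -/
noncomputable def rho {A : Type*} (u : List A) : ℕ :=
  sInf {m : ℕ | MReduced m u}

section Aux

variable {A : Type*}

lemma simonCong_mono {k k' : ℕ} {u v : List A} (h : k' ≤ k) (hc : SimonCong k u v) :
    SimonCong k' u v := fun s hs => hc s (hs.trans h)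

lemma simonCong_zero (u v : List A) : SimonCong 0 u v := by
  intro s hs
  have : s = [] := List.eq_nil_of_length_eq_zero (Nat.le_zero.mp hs)
  subst this
  simp

lemma simonCong_bound {k : ℕ} {u v : List A} (h : u ≠ v)
    (hc : SimonCong k u v) : k ≤ u.length + v.length := by
  by_contra hk
  push_neg at hk
  have h1 : u.Sublist v := (hc u ((Nat.le_add_right _ _).trans hk.le)).mp (List.Sublist.refl u)
  have h2 : v.Sublist u := (hc v ((Nat.le_add_left _ _).trans hk.le)).mpr (List.Sublist.refl v)
  exact h (h1.antisymm h2)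

/-- the finite value of the subword distance for distinct words -/
noncomputable def dN (x y : List A) : ℕ := sSup {k | SimonCong k x y}

lemma dN_spec {x y : List A} (h : x ≠ y) :
    SimonCong (dN x y) x y ∧ ∀ k, SimonCong k x y → k ≤ dN x y := by
  have hne : {k | SimonCong k x y}.Nonempty := ⟨0, simonCong_zero x y⟩
  have hbdd : BddAbove {k | SimonCong k x y} :=
    ⟨x.length + y.length, fun k hk => simonCong_bound h hk⟩
  exact ⟨Nat.sSup_mem hne hbdd, fun k hk => le_csSup hbdd hk⟩

lemma delta_eq_dN {x y : List A} (h : x ≠ y) : delta x y = (dN x y : ℕ∞) := by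
  unfold delta
  apply le_antisymm
  · exact iSup₂_le fun k hk => Nat.cast_le.mpr ((dN_spec h).2 k hk)
  · exact le_iSup₂ (f := fun (k : ℕ) (_ : k ∈ {k : ℕ | SimonCong k x y}) => (k : ℕ∞))
      (dN x y) (dN_spec h).1

lemma key (v₁ : List A) (a : A) (v₂ : List A) :
    dN (v₁ ++ v₂) (v₁ ++ a :: v₂) = dN v₁ (v₁ ++ [a]) + dN (a :: v₂) v₂ := by
  have hne1 : v₁ ≠ v₁ ++ [a] := fun h => by simpa using congrArg List.length h
  have hne2 : a :: v₂ ≠ v₂ := fun h => by simpa using congrArg List.length h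
  have hne3 : v₁ ++ v₂ ≠ v₁ ++ a :: v₂ := fun h => by simpa using congrArg List.length h
  set R := dN v₁ (v₁ ++ [a]) with hRdef
  set L := dN (a :: v₂) v₂ with hLdef
  have hRc : SimonCong R v₁ (v₁ ++ [a]) := (dN_spec hne1).1
  have hLc : SimonCong L (a :: v₂) v₂ := (dN_spec hne2).1
  -- lower bound
  have hlow : SimonCong (R + L) (v₁ ++ v₂) (v₁ ++ a :: v₂) := by
    intro s hs
    constructor
    · intro h
      exact h.trans (List.Sublist.append (List.Sublist.refl v₁) (List.sublist_cons_self a v₂))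
    · intro h
      obtain ⟨x, y, rfl, hx, hy⟩ := List.sublist_append_iff.mp h
      rcases List.sublist_cons_iff.mp hy with hy' | ⟨t, rfl, ht⟩
      · exact List.Sublist.append hx hy'
      · rw [List.length_append, List.length_cons] at hs
        by_cases hxr : x.length + 1 ≤ R
        · have hxa : (x ++ [a]).Sublist v₁ :=
            (hRc (x ++ [a]) (by simpa using hxr)).mpr
              (List.Sublist.append hx (List.Sublist.refl [a]))
          have : (x ++ [a]) ++ t = x ++ a :: t := (List.append_cons x a t).symm
          rw [← this]
          exact List.Sublist.append hxa ht
        · have htl : t.length + 1 ≤ L := by omega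
          have hat : (a :: t).Sublist v₂ :=
            (hLc (a :: t) (by simpa using htl)).mp (ht.cons₂ a)
          exact List.Sublist.append hx hat
  -- witnesses for the upper bound
  have hRw : ¬ SimonCong (R + 1) v₁ (v₁ ++ [a]) := fun hc => by
    have := (dN_spec hne1).2 _ hc; omega
  have hLw : ¬ SimonCong (L + 1) (a :: v₂) v₂ := fun hc => by
    have := (dN_spec hne2).2 _ hc; omega
  obtain ⟨t₁, ht₁len, ht₁, hnt₁⟩ :
      ∃ t₁ : List A, t₁.length ≤ R ∧ t₁.Sublist v₁ ∧ ¬ (t₁ ++ [a]).Sublist v₁ := by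
    have hw : ∃ s : List A, s.length ≤ R + 1 ∧ s.Sublist (v₁ ++ [a]) ∧ ¬ s.Sublist v₁ := by
      by_contra hcon
      push_neg at hcon
      apply hRw
      intro s hs
      exact ⟨fun h => h.trans (List.sublist_append_left v₁ [a]), fun h => hcon s hs h⟩
    obtain ⟨s, hslen, hssub, hsnot⟩ := hw
    obtain ⟨l₁, l₂, rfl, hl₁, hl₂⟩ := List.sublist_append_iff.mp hssub
    rcases List.sublist_singleton.mp hl₂ with rfl | rfl
    · exact absurd (by simpa using hl₁) hsnot
    · refine ⟨l₁, by simpa using hslen, hl₁, hsnot⟩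
  obtain ⟨t₂, ht₂len, ht₂, hnt₂⟩ :
      ∃ t₂ : List A, t₂.length ≤ L ∧ t₂.Sublist v₂ ∧ ¬ (a :: t₂).Sublist v₂ := by
    have hw : ∃ s : List A, s.length ≤ L + 1 ∧ s.Sublist (a :: v₂) ∧ ¬ s.Sublist v₂ := by
      by_contra hcon
      push_neg at hcon
      apply hLw
      intro s hs
      exact ⟨fun h => hcon s hs h, fun h => h.trans (List.sublist_cons_self a v₂)⟩
    obtain ⟨s, hslen, hssub, hsnot⟩ := hw
    rcases List.sublist_cons_iff.mp hssub with h' | ⟨r, rfl, hr⟩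
    · exact absurd h' hsnot
    · exact ⟨r, by simpa using hslen, hr, hsnot⟩
  have hup : ¬ SimonCong (R + L + 1) (v₁ ++ v₂) (v₁ ++ a :: v₂) := by
    intro hc
    have hsu : (t₁ ++ a :: t₂).Sublist (v₁ ++ a :: v₂) :=
      List.Sublist.append ht₁ (ht₂.cons₂ a)
    have hlen : (t₁ ++ a :: t₂).length ≤ R + L + 1 := by
      simp only [List.length_append, List.length_cons]; omega
    have hsub2 : (t₁ ++ a :: t₂).Sublist (v₁ ++ v₂) := (hc _ hlen).mpr hsu
    obtain ⟨x, y, hxy, hx, hy⟩ := List.sublist_append_iff.mp hsub2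
    rcases List.append_eq_append_iff.mp hxy.symm with ⟨w, hw1, hw2⟩ | ⟨w, hw1, hw2⟩
    · -- t₁ = x ++ w, y = w ++ a :: t₂
      have : (a :: t₂).Sublist y := hw2 ▸ List.sublist_append_right w (a :: t₂)
      exact hnt₂ (this.trans hy)
    · -- x = t₁ ++ w, a :: t₂ = w ++ y
      rcases w with _ | ⟨c, w'⟩
      · simp only [List.nil_append] at hw2
        exact hnt₂ (hw2 ▸ hy)
      · have hc' : c = a := by
          have := congrArg (fun l => l.head?) hw2
          simpa using this.symm
        rw [← hc'] at hnt₁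
        have hx' : (t₁ ++ [c]).Sublist x := by
          rw [hw1]
          exact List.Sublist.append (List.Sublist.refl t₁) ((List.nil_sublist w').cons₂ c)
        exact hnt₁ (hx'.trans hx)
  have h1 : R + L ≤ dN (v₁ ++ v₂) (v₁ ++ a :: v₂) := (dN_spec hne3).2 _ hlow
  have h2 : ¬ (R + L + 1 ≤ dN (v₁ ++ v₂) (v₁ ++ a :: v₂)) := fun hle =>
    hup (simonCong_mono hle (dN_spec hne3).1)
  omega

lemma exists_cut : ∀ {u' u : List A}, u'.Sublist u → u' ≠ u →
    ∃ v₁ a v₂, u = v₁ ++ a :: v₂ ∧ u'.Sublist (v₁ ++ v₂) := by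
  intro u' u h
  induction h with
  | slnil => exact fun hne => absurd rfl hne
  | @cons l₁ l₂ a h ih => exact fun _ => ⟨[], a, l₂, rfl, h⟩
  | @cons_cons l₁ l₂ a h ih =>
    intro hne
    have hne' : l₁ ≠ l₂ := fun he => hne (by rw [he])
    obtain ⟨v₁, b, v₂, hcut, hsub⟩ := ih hne'
    exact ⟨a :: v₁, b, v₂, by rw [hcut]; rfl, hsub.cons₂ a⟩

lemma value_eq (u v₁ : List A) (a : A) (v₂ : List A) (hc : u = v₁ ++ a :: v₂) :
    sideR v₁ [a] + sideL [a] v₂ + 1 = ((dN (v₁ ++ v₂) u + 1 : ℕ) : ℕ∞) := by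
  subst hc
  have hne1 : v₁ ≠ v₁ ++ [a] := fun h => by simpa using congrArg List.length h
  have hne2 : ([a] : List A) ++ v₂ ≠ v₂ := fun h => by simpa using congrArg List.length h
  rw [sideR, sideL, delta_eq_dN hne1, delta_eq_dN hne2]
  have : ([a] : List A) ++ v₂ = a :: v₂ := rfl
  rw [this, key]
  push_cast
  ring

end Aux

theorem stmt3 {A : Type*} [Fintype A] [Nonempty A] (u : List A) (hu : u ≠ []) :
    (rho u : ℕ∞) =
      ⨆ p : {p : List A × A × List A // u = p.1 ++ p.2.1 :: p.2.2},
        sideR p.val.1 [p.val.2.1] + sideL [p.val.2.1] p.val.2.2 + 1 := by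
  have hMne : {m : ℕ | MReduced m u}.Nonempty := by
    refine ⟨u.length, fun u' hsub hne hcong => ?_⟩
    exact hne (hsub.antisymm ((hcong u le_rfl).mpr (List.Sublist.refl u)))
  apply le_antisymm
  · -- ρ ≤ sup
    rcases Nat.eq_zero_or_pos (rho u) with h0 | hpos
    · rw [h0]; exact zero_le
    · have hnot : rho u - 1 ∉ {m : ℕ | MReduced m u} :=
        Nat.notMem_of_lt_sInf (by unfold rho at *; omega)
      simp only [Set.mem_setOf_eq, MReduced] at hnot
      push_neg at hnot
      obtain ⟨u', hsub, hne, hcong⟩ := hnot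
      obtain ⟨v₁, a, v₂, hcut, hsub'⟩ := exists_cut hsub hne
      have hwne : v₁ ++ v₂ ≠ u := fun h => by
        rw [hcut] at h; simpa using congrArg List.length h
      have hw : SimonCong (rho u - 1) (v₁ ++ v₂) u := by
        intro s hs
        constructor
        · intro h
          refine h.trans ?_
          rw [hcut]
          exact List.Sublist.append (List.Sublist.refl v₁) (List.sublist_cons_self a v₂)
        · intro h
          exact ((hcong s hs).mpr h).trans hsub'
      have hle : rho u - 1 ≤ dN (v₁ ++ v₂) u := (dN_spec hwne).2 _ hw
      have hle2 : rho u ≤ dN (v₁ ++ v₂) u + 1 := by omega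
      calc (rho u : ℕ∞) ≤ ((dN (v₁ ++ v₂) u + 1 : ℕ) : ℕ∞) := Nat.cast_le.mpr hle2
        _ = sideR v₁ [a] + sideL [a] v₂ + 1 := (value_eq u v₁ a v₂ hcut).symm
        _ ≤ _ := le_iSup (f := fun p : {p : List A × A × List A // u = p.1 ++ p.2.1 :: p.2.2} =>
              sideR p.val.1 [p.val.2.1] + sideL [p.val.2.1] p.val.2.2 + 1)
              ⟨(v₁, a, v₂), hcut⟩
  · -- sup ≤ ρ
    refine iSup_le fun p => ?_
    obtain ⟨⟨v₁, a, v₂⟩, hcut⟩ := p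
    have hwne : v₁ ++ v₂ ≠ u := fun h => by
      rw [hcut] at h; simpa using congrArg List.length h
    have hmem : MReduced (rho u) u := Nat.sInf_mem hMne
    have hwsub : (v₁ ++ v₂).Sublist u := by
      rw [hcut]
      exact List.Sublist.append (List.Sublist.refl v₁) (List.sublist_cons_self a v₂)
    have hlt : dN (v₁ ++ v₂) u < rho u := by
      by_contra hge
      push_neg at hge
      exact hmem (v₁ ++ v₂) hwsub hwne (simonCong_mono hge (dN_spec hwne).1)
    calc sideR v₁ [a] + sideL [a] v₂ + 1 = ((dN (v₁ ++ v₂) u + 1 : ℕ) : ℕ∞) :=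
          value_eq u v₁ a v₂ hcut
      _ ≤ (rho u : ℕ∞) := Nat.cast_le.mpr (by omega)
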